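/- arXiv:2407.02276 — 3 statements merged into one kernel-verified Lean document; each statement's English description precedes it below -/
import Mathlib

section
/- Let (A, φ) be a noncommutative probability space realized on a Hilbert space H with unit vector ξ such that φ(a) = ⟨ξ, aξ⟩, let P be the orthogonal projection onto Cξ and Q = 1 − P. Then for all a₁,...,a_k in A, the boolean cumulant satisfies K_bool,k[a₁,...,a_k] = ⟨ξ, a₁ Q a₂ Q ··· Q a_k ξ⟩, where K_bool,k[a₁,...,a_k] = Σ_{π ∈ I_k} (−1)^{|π|−1} Π_{B ∈ π} φ(Π_{j ∈ B} a_j) and I_k is the set of interval partitions of [k]. -/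
open List

namespace Stmt3Aux

variable {M : Type*} [Monoid M]

/-- Boolean cumulant functional, defined recursively. -/
def bc (φ : M → ℂ) : List M → ℂ
  | [] => 1
  | [x] => φ x
  | x :: y :: t => bc φ ((x * y) :: t) - φ x * bc φ (y :: t)
  termination_by l => l.length

@[simp] lemma bc_singleton (φ : M → ℂ) (x : M) : bc φ [x] = φ x := by
  simp [bc]

lemma bc_cons_cons (φ : M → ℂ) (x y : M) (t : List M) :
    bc φ (x :: y :: t) = bc φ ((x * y) :: t) - φ x * bc φ (y :: t) := by
  rw [bc]

lemma headI_tail {α : Type*} [Inhabited α] {l : List α} (h : l ≠ []) :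
    l.headI :: l.tail = l := by
  cases l with
  | nil => exact absurd rfl h
  | cons a t => rfl

lemma blocks_ne_nil {n : ℕ} (hn : 0 < n) (c : Composition n) : c.blocks ≠ [] := by
  intro h
  have := c.blocks_sum
  rw [h] at this
  simp at this
  omega

lemma headI_pos {n : ℕ} (hn : 0 < n) (c : Composition n) : 0 < c.blocks.headI := by
  rcases hB : c.blocks with _ | ⟨b, bs⟩
  · exact absurd hB (blocks_ne_nil hn c)
  · simp only [List.headI_cons]
    exact c.blocks_pos (by rw [hB]; exact List.mem_cons_self)

lemma headI_add_tail_sum {n : ℕ} (hn : 0 < n) (c : Composition n) :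
    c.blocks.headI + c.blocks.tail.sum = n := by
  have := c.blocks_sum
  conv_rhs at this => skip
  rw [← headI_tail (blocks_ne_nil hn c), List.sum_cons] at this
  exact this

/-- prepend a block of size 1 -/
def consOne {n : ℕ} (c : Composition n) : Composition (n + 1) :=
  ⟨1 :: c.blocks, by
    intro i hi
    rcases List.mem_cons.1 hi with h | h
    · omega
    · exact c.blocks_pos h, by simp [c.blocks_sum, add_comm]⟩

@[simp] lemma consOne_blocks {n : ℕ} (c : Composition n) :
    (consOne c).blocks = 1 :: c.blocks := rfl

@[simp] lemma consOne_length {n : ℕ} (c : Composition n) :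
    (consOne c).length = c.length + 1 := by
  simp [Composition.length]

/-- increase the first block by one -/
def succHead {n : ℕ} (hn : 0 < n) (c : Composition n) : Composition (n + 1) :=
  ⟨(c.blocks.headI + 1) :: c.blocks.tail, by
    intro i hi
    rcases List.mem_cons.1 hi with h | h
    · omega
    · exact c.blocks_pos (List.mem_of_mem_tail h), by
    have := headI_add_tail_sum hn c
    simp only [List.sum_cons]
    omega⟩

@[simp] lemma succHead_blocks {n : ℕ} (hn : 0 < n) (c : Composition n) :
    (succHead hn c).blocks = (c.blocks.headI + 1) :: c.blocks.tail := rfl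

@[simp] lemma succHead_length {n : ℕ} (hn : 0 < n) (c : Composition n) :
    (succHead hn c).length = c.length := by
  simp only [Composition.length, succHead_blocks, List.length_cons]
  conv_rhs => rw [← headI_tail (blocks_ne_nil hn c)]
  simp

/-- inverse construction -/
def uncons {n : ℕ} (c : Composition (n + 2)) :
    Composition (n + 1) ⊕ Composition (n + 1) :=
  if h : c.blocks.headI = 1 then
    Sum.inl ⟨c.blocks.tail, by
      intro i hi; exact c.blocks_pos (List.mem_of_mem_tail hi), by
      have := headI_add_tail_sum (by omega) c; omega⟩
  else
    Sum.inr ⟨(c.blocks.headI - 1) :: c.blocks.tail, by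
      intro i hi
      rcases List.mem_cons.1 hi with h' | h'
      · have := headI_pos (by omega : 0 < n + 2) c; omega
      · exact c.blocks_pos (List.mem_of_mem_tail h'), by
      have h1 := headI_pos (by omega : 0 < n + 2) c
      have h2 := headI_add_tail_sum (by omega : 0 < n + 2) c
      simp only [List.sum_cons]
      omega⟩

/-- The two-term decomposition of compositions. -/
def compEquiv (n : ℕ) : (Composition (n + 1) ⊕ Composition (n + 1)) ≃ Composition (n + 2) where
  toFun := Sum.elim consOne (succHead (Nat.succ_pos n))
  invFun := uncons
  left_inv := by
    rintro (c | c)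
    · simp only [Sum.elim_inl]
      unfold uncons
      rw [dif_pos (by simp)]
      congr 1
    · have h1 : 0 < c.blocks.headI := headI_pos (Nat.succ_pos n) c
      simp only [Sum.elim_inr]
      unfold uncons
      rw [dif_neg (by simp; omega)]
      congr 1
      ext1
      simp only [succHead_blocks, List.headI_cons, List.tail_cons, Nat.add_sub_cancel]
      exact headI_tail (blocks_ne_nil (Nat.succ_pos n) c)
  right_inv := by
    intro c
    unfold uncons
    by_cases h : c.blocks.headI = 1
    · rw [dif_pos h]
      simp only [Sum.elim_inl]
      ext1
      rw [consOne_blocks]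
      conv_rhs => rw [← headI_tail (blocks_ne_nil (by omega : 0 < n + 2) c)]
      rw [h]
    · rw [dif_neg h]
      simp only [Sum.elim_inr]
      ext1
      rw [succHead_blocks]
      have h1 : 0 < c.blocks.headI := headI_pos (by omega : 0 < n + 2) c
      simp only [List.headI_cons, List.tail_cons]
      rw [Nat.sub_add_cancel h1]
      exact headI_tail (blocks_ne_nil (by omega : 0 < n + 2) c)

end Stmt3Aux

set_option linter.unusedSectionVars false

namespace Stmt3Aux

open List

variable {M : Type*} [Monoid M]

lemma splitWrt_consOne (x : M) (l : List M) {n : ℕ} (c : Composition n) :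
    List.splitWrtComposition (x :: l) (consOne c) = [x] :: List.splitWrtComposition l c := by
  simp [List.splitWrtComposition, List.splitWrtCompositionAux_cons]

lemma splitWrt_succHead (φ : M → ℂ) (x y : M) (t : List M) {n : ℕ} (hn : 0 < n) (c : Composition n) :
    ((List.splitWrtComposition (x :: y :: t) (succHead hn c)).map (fun p => φ p.prod)).prod
      = ((List.splitWrtComposition ((x * y) :: t) c).map (fun p => φ p.prod)).prod := by
  obtain ⟨m, hm⟩ : ∃ m, c.blocks.headI = m + 1 :=
    ⟨c.blocks.headI - 1, by have := headI_pos hn c; omega⟩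
  rw [List.splitWrtComposition, succHead_blocks, List.splitWrtCompositionAux_cons]
  conv_rhs => rw [List.splitWrtComposition, ← headI_tail (blocks_ne_nil hn c),
    List.splitWrtCompositionAux_cons]
  rw [hm]
  simp only [List.take_succ_cons, List.drop_succ_cons, List.map_cons, List.prod_cons,
    List.tail_cons]
  rw [mul_assoc]

end Stmt3Aux

namespace Stmt3Aux

variable {M : Type*} [Monoid M]

lemma comp_one_blocks (c : Composition 1) : c.blocks = [1] := by
  have h1 := headI_pos one_pos c
  have h2 := headI_add_tail_sum one_pos c
  have h4 : c.blocks.tail = [] := by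
    cases hT : c.blocks.tail with
    | nil => rfl
    | cons a s =>
      have ha : 0 < a := c.blocks_pos (List.mem_of_mem_tail (hT ▸ List.mem_cons_self))
      rw [hT, List.sum_cons] at h2
      omega
  have h3 : c.blocks.headI = 1 := by rw [h4] at h2; simpa using h2
  conv_lhs => rw [← headI_tail (blocks_ne_nil one_pos c)]
  rw [h3, h4]

lemma sum_comp (φ : M → ℂ) : ∀ (n : ℕ), 0 < n → ∀ l : List M, l.length = n →
    (∑ c : Composition n, (-1 : ℂ) ^ (c.length - 1) *
      ((l.splitWrtComposition c).map (fun p => φ p.prod)).prod) = bc φ l := by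
  intro n
  induction n using Nat.strong_induction_on with
  | _ n IH =>
    intro hn l hl
    cases l with
    | nil => simp at hl; omega
    | cons x l' =>
      cases l' with
      | nil =>
        simp only [List.length_singleton] at hl
        subst hl
        have hterm : ∀ c : Composition 1, (-1 : ℂ) ^ (c.length - 1) *
            ((List.splitWrtComposition [x] c).map (fun p => φ p.prod)).prod = φ x := by
          intro c
          have hb := comp_one_blocks c
          have hlen : c.length = 1 := by simp [Composition.length, hb]
          rw [List.splitWrtComposition, hb, hlen]
          simp [List.splitWrtCompositionAux]
        rw [Finset.sum_congr rfl (fun c _ => hterm c)]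
        rw [Finset.sum_const, Finset.card_univ, composition_card]
        simp
      | cons y t =>
        simp only [List.length_cons] at hl
        subst hl
        rw [← Equiv.sum_comp (compEquiv t.length)
          (fun c => (-1 : ℂ) ^ (c.length - 1) *
            ((List.splitWrtComposition (x :: y :: t) c).map (fun p => φ p.prod)).prod)]
        rw [Fintype.sum_sum_type]
        have hpos : 0 < t.length + 1 := Nat.succ_pos _
        have h1 : ∀ c' : Composition (t.length + 1),
            (-1 : ℂ) ^ ((compEquiv t.length (Sum.inl c')).length - 1) *
              ((List.splitWrtComposition (x :: y :: t) (compEquiv t.length (Sum.inl c'))).map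
                (fun p => φ p.prod)).prod
            = -(φ x * ((-1 : ℂ) ^ (c'.length - 1) *
                ((List.splitWrtComposition (y :: t) c').map (fun p => φ p.prod)).prod)) := by
          intro c'
          have hce : compEquiv t.length (Sum.inl c') = consOne c' := rfl
          rw [hce, splitWrt_consOne, consOne_length]
          obtain ⟨p, hp⟩ : ∃ p, c'.length = p + 1 :=
            ⟨c'.length - 1, by have := Composition.length_pos_of_pos c' hpos; omega⟩
          rw [hp]
          simp only [Nat.add_sub_cancel, List.map_cons, List.prod_cons, List.prod_singleton, List.prod_nil, mul_one,
            pow_succ]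
          ring
        have h2 : ∀ c' : Composition (t.length + 1),
            (-1 : ℂ) ^ ((compEquiv t.length (Sum.inr c')).length - 1) *
              ((List.splitWrtComposition (x :: y :: t) (compEquiv t.length (Sum.inr c'))).map
                (fun p => φ p.prod)).prod
            = (-1 : ℂ) ^ (c'.length - 1) *
                ((List.splitWrtComposition ((x * y) :: t) c').map (fun p => φ p.prod)).prod := by
          intro c'
          have hce : compEquiv t.length (Sum.inr c') = succHead hpos c' := rfl
          rw [hce, succHead_length, splitWrt_succHead φ x y t hpos c']
        rw [Finset.sum_congr rfl (fun c' _ => h1 c'), Finset.sum_congr rfl (fun c' _ => h2 c')]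
        rw [Finset.sum_neg_distrib, ← Finset.mul_sum]
        rw [IH (t.length + 1) (by omega) hpos (y :: t) (by simp),
          IH (t.length + 1) (by omega) hpos ((x * y) :: t) (by simp),
          bc_cons_cons]
        ring

end Stmt3Aux

namespace Stmt3Aux

section Analytic

variable {H : Type*} [NormedAddCommGroup H] [InnerProductSpace ℂ H]

lemma intersperse_mul_head (Q x y : H →L[ℂ] H) (t : List (H →L[ℂ] H)) :
    (List.intersperse Q ((x * y) :: t)).prod = x * (List.intersperse Q (y :: t)).prod := by
  cases t with
  | nil => simp
  | cons z t' =>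
    rw [List.intersperse_cons_cons, List.intersperse_cons_cons]
    simp only [List.prod_cons]
    rw [mul_assoc]

lemma moment_eq (ξ : H) (P Q : H →L[ℂ] H)
    (hP : ∀ x : H, P x = (inner ℂ ξ x : ℂ) • ξ) (hQ : Q = 1 - P) :
    ∀ (n : ℕ) (l : List (H →L[ℂ] H)), l.length = n → l ≠ [] →
      (inner ℂ ξ (((List.intersperse Q l).prod) ξ) : ℂ)
        = bc (fun T => (inner ℂ ξ (T ξ) : ℂ)) l := by
  intro n
  induction n using Nat.strong_induction_on with
  | _ n IH =>
    intro l hl hne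
    cases l with
    | nil => exact absurd rfl hne
    | cons x l' =>
      cases l' with
      | nil => simp
      | cons y t =>
        subst hl
        rw [List.intersperse_cons_cons]
        simp only [List.prod_cons, ← mul_assoc]
        have hr : ((x * Q) * (List.intersperse Q (y :: t)).prod) ξ
            = x ((Q ((List.intersperse Q (y :: t)).prod ξ))) := by
          simp [ContinuousLinearMap.mul_apply]
        have hQr : Q ((List.intersperse Q (y :: t)).prod ξ)
            = (List.intersperse Q (y :: t)).prod ξ
              - (inner ℂ ξ ((List.intersperse Q (y :: t)).prod ξ) : ℂ) • ξ := by
          rw [hQ]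
          simp [hP]
        rw [hr, hQr]
        simp only [map_sub, map_smul, inner_sub_right, inner_smul_right]
        have hxr : (inner ℂ ξ (x ((List.intersperse Q (y :: t)).prod ξ)) : ℂ)
            = inner ℂ ξ ((List.intersperse Q ((x * y) :: t)).prod ξ) := by
          rw [intersperse_mul_head]
          simp [ContinuousLinearMap.mul_apply]
        rw [hxr]
        rw [IH (t.length + 1) (by simp) ((x * y) :: t) (by simp) (by simp),
          IH (t.length + 1) (by simp) (y :: t) (by simp) (by simp),
          bc_cons_cons]
        ring

end Analytic

end Stmt3Aux

namespace Stmt3Aux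

lemma split_ofFn (k : ℕ) {α β : Type*} (φ : List α → β) (a : Fin k → α) (c : Composition k) :
    ((((List.finRange k).map a).splitWrtComposition c).map φ)
      = List.ofFn (fun i : Fin c.length =>
          φ ((List.finRange (c.blocksFun i)).map (fun j => a (c.embedding i j)))) := by
  have hlen : ((List.finRange k).map a).length = k := by simp
  apply List.ext_getElem
  · simp [List.length_splitWrtComposition]
  · intro i h1 h2
    have hi : i < c.length := by simpa using h2
    rw [List.getElem_map, List.getElem_ofFn]
    congr 1
    rw [List.getElem_splitWrtComposition]
    have hle : c.sizeUpTo (i + 1) ≤ k := c.sizeUpTo_le _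
    have hsucc : c.sizeUpTo (i + 1) = c.sizeUpTo i + c.blocksFun ⟨i, hi⟩ :=
      c.sizeUpTo_succ hi
    apply List.ext_getElem
    · simp only [List.length_drop, List.length_take, hlen, List.length_map,
        List.length_finRange]
      omega
    · intro j hj1 hj2
      simp only [List.length_map, List.length_finRange] at hj2
      rw [List.getElem_drop, List.getElem_take, List.getElem_map, List.getElem_map,
        List.getElem_finRange, List.getElem_finRange]
      exact congrArg a (Fin.ext (by simp))

end Stmt3Aux


/-- Boolean cumulants via the projection `Q` onto the orthogonal complement of the
state vector: let `(A,φ)` be realized on a Hilbert space `H` with unit vector `ξ`,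
`φ(a) = ⟨ξ, a ξ⟩`, `P` the rank-one projection onto `ℂξ` and `Q = 1 - P`.  Then
`K_bool,k[a₁,...,a_k] = ⟨ξ, a₁ Q a₂ Q ⋯ Q a_k ξ⟩`, where the boolean cumulant is
`∑_{π ∈ I_k} (-1)^{|π|-1} ∏_{B ∈ π} φ(∏_{j ∈ B} a_j)` over interval partitions of
`[k]` (encoded as compositions of `k`, with `c.embedding i` enumerating the `i`-th
block in increasing order). -/
theorem stmt3 {H : Type*} [NormedAddCommGroup H] [InnerProductSpace ℂ H]
    (ξ : H) (hξ : ‖ξ‖ = 1) (P Q : H →L[ℂ] H)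
    (hP : ∀ x : H, P x = (inner ℂ ξ x : ℂ) • ξ) (hQ : Q = 1 - P)
    (k : ℕ) (hk : 1 ≤ k) (a : Fin k → (H →L[ℂ] H)) :
    (∑ c : Composition k, (-1 : ℂ) ^ (c.length - 1) *
        ∏ i : Fin c.length,
          (inner ℂ ξ ((((List.finRange (c.blocksFun i)).map
            (fun j => a (c.embedding i j))).prod) ξ) : ℂ))
      = (inner ℂ ξ (((List.intersperse Q ((List.finRange k).map a)).prod) ξ) : ℂ) := by
  set φ : (H →L[ℂ] H) → ℂ := fun T => (inner ℂ ξ (T ξ) : ℂ) with hφ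
  set l : List (H →L[ℂ] H) := (List.finRange k).map a with hl
  have hlen : l.length = k := by simp [hl]
  have hne : l ≠ [] := by
    intro h
    rw [h] at hlen
    simp at hlen
    omega
  have h3 : ∀ c : Composition k,
      (∏ i : Fin c.length,
        (inner ℂ ξ ((((List.finRange (c.blocksFun i)).map
          (fun j => a (c.embedding i j))).prod) ξ) : ℂ))
      = ((l.splitWrtComposition c).map (fun p => φ p.prod)).prod := by
    intro c
    rw [hl, Stmt3Aux.split_ofFn k (fun p => φ p.prod) a c, List.prod_ofFn]
  calc (∑ c : Composition k, (-1 : ℂ) ^ (c.length - 1) *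
        ∏ i : Fin c.length,
          (inner ℂ ξ ((((List.finRange (c.blocksFun i)).map
            (fun j => a (c.embedding i j))).prod) ξ) : ℂ))
      = ∑ c : Composition k, (-1 : ℂ) ^ (c.length - 1) *
          ((l.splitWrtComposition c).map (fun p => φ p.prod)).prod := by
        exact Finset.sum_congr rfl (fun c _ => by rw [h3 c])
    _ = Stmt3Aux.bc φ l := Stmt3Aux.sum_comp φ k hk l hlen
    _ = (inner ℂ ξ (((List.intersperse Q l).prod) ξ) : ℂ) :=
        (Stmt3Aux.moment_eq ξ P Q hP hQ k l hlen hne).symm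
end

section
/- Let G_n = (V_n, E_n) be finite digraphs, let (Ω,ρ) be a complete probability space, E ⊆ Ω×Ω measurable, (A_{n,v})_{v∈V_n} a measurable partition of Ω into sets of measure 1/|V_n|, and Ẽ_n = ⋃_{(v,w)∈E_n} A_{n,v} × A_{n,w}. If ρ^{×2}(Ẽ_n Δ E) → 0 as n → ∞, then for every finite digraph G' = (V',E'), lim_{n→∞} |Hom(G',G_n)| / |V_n|^{|V'|} = ρ^{×V'}(Hom(G',(Ω,E))). -/
open MeasureTheory Filter
open scoped ENNReal symmDiff

private lemma stmt9_map_eval_pair {Ω : Type*} [MeasurableSpace Ω] (ρ : Measure Ω)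
    [IsProbabilityMeasure ρ] {ι : Type*} [Fintype ι] {a b : ι} (hab : a ≠ b) :
    Measure.map (fun ω : ι → Ω => (ω a, ω b)) (Measure.pi fun _ : ι => ρ) = ρ.prod ρ := by
  classical
  refine (Measure.prod_eq fun s t hs ht => ?_).symm
  rw [Measure.map_apply ((measurable_pi_apply a).prodMk (measurable_pi_apply b)) (hs.prod ht)]
  have hpre : (fun ω : ι → Ω => (ω a, ω b)) ⁻¹' (s ×ˢ t)
      = Set.pi Set.univ (fun i => if i = a then s else if i = b then t else Set.univ) := by
    ext ω
    simp only [Set.mem_preimage, Set.mem_prod, Set.mem_pi, Set.mem_univ, forall_true_left]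
    constructor
    · rintro ⟨h1, h2⟩ i
      by_cases hia : i = a
      · subst hia; simp [h1]
      · by_cases hib : i = b
        · subst hib; simp [hia, h2]
        · simp [hia, hib]
    · intro h
      refine ⟨?_, ?_⟩
      · have := h a; simpa using this
      · have := h b; simpa [hab.symm] using this
  rw [hpre, Measure.pi_pi]
  have h1 : ∀ i ∈ (Finset.univ : Finset ι), i ∉ ({a, b} : Finset ι) →
      ρ (if i = a then s else if i = b then t else Set.univ) = 1 := by
    intro i _ hi
    simp only [Finset.mem_insert, Finset.mem_singleton, not_or] at hi
    simp [hi.1, hi.2]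
  rw [← Finset.prod_subset (Finset.subset_univ ({a, b} : Finset ι)) h1,
    Finset.prod_pair hab]
  simp [hab, Ne.symm hab]

private lemma stmt9_counting {Ω : Type*} [MeasurableSpace Ω] (ρ : Measure Ω)
    [IsProbabilityMeasure ρ] {ι : Type*} [Fintype ι] {κ : Type*} [Fintype κ]
    (A : κ → Set Ω) (hmeasA : ∀ v, MeasurableSet (A v))
    (hdisj : Pairwise (Function.onFun Disjoint A))
    (hcover : ⋃ v, A v = Set.univ)
    (hsize : ∀ v, ρ (A v) = 1 / (Fintype.card κ : ℝ≥0∞))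
    (En' : κ → κ → Prop) (E' : ι → ι → Prop) :
    (Measure.pi fun _ : ι => ρ)
      {ω : ι → Ω | ∀ a b, E' a b → ∃ v w, En' v w ∧ ω a ∈ A v ∧ ω b ∈ A w}
    = (Nat.card {f : ι → κ // ∀ a b, E' a b → En' (f a) (f b)} : ℝ≥0∞)
        * (1 / (Fintype.card κ : ℝ≥0∞)) ^ (Fintype.card ι) := by
  classical
  set B : (ι → κ) → Set (ι → Ω) := fun f => Set.pi Set.univ fun a => A (f a) with hB
  set P : (ι → κ) → Prop := fun f => ∀ a b, E' a b → En' (f a) (f b) with hP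
  -- uniqueness of the block containing a point
  have huniq : ∀ (x : Ω) (v w : κ), x ∈ A v → x ∈ A w → v = w := by
    intro x v w hv hw
    by_contra h
    exact Set.disjoint_left.mp (hdisj h) hv hw
  have hTeq : {ω : ι → Ω | ∀ a b, E' a b → ∃ v w, En' v w ∧ ω a ∈ A v ∧ ω b ∈ A w}
      = ⋃ f ∈ Finset.univ.filter P, B f := by
    ext ω
    simp only [Set.mem_setOf_eq, Set.mem_iUnion, Finset.mem_filter, Finset.mem_univ, true_and,
      exists_prop]
    constructor
    · intro hω
      have hfa : ∀ a, ∃ v, ω a ∈ A v := by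
        intro a
        have : ω a ∈ ⋃ v, A v := hcover.symm ▸ Set.mem_univ _
        exact Set.mem_iUnion.mp this
      choose f hf using hfa
      refine ⟨f, ?_, ?_⟩
      · intro a b hab
        obtain ⟨v, w, hvw, hav, hbw⟩ := hω a b hab
        rwa [huniq (ω a) v (f a) hav (hf a), huniq (ω b) w (f b) hbw (hf b)] at hvw
      · intro a _
        exact hf a
    · rintro ⟨f, hPf, hωf⟩ a b hab
      exact ⟨f a, f b, hPf a b hab, hωf a (Set.mem_univ a), hωf b (Set.mem_univ b)⟩
  rw [hTeq, measure_biUnion_finset ?_ (fun f _ => MeasurableSet.univ_pi fun a => hmeasA (f a))]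
  · have hBval : ∀ f : ι → κ, (Measure.pi fun _ : ι => ρ) (B f)
        = (1 / (Fintype.card κ : ℝ≥0∞)) ^ (Fintype.card ι) := by
      intro f
      rw [hB, Measure.pi_pi]
      simp only [hsize]
      rw [Finset.prod_const, Finset.card_univ]
    simp only [show ∀ f : ι → κ, (Measure.pi fun _ : ι => ρ) (Set.pi Set.univ fun a => A (f a))
        = (1 / (Fintype.card κ : ℝ≥0∞)) ^ (Fintype.card ι) from hBval, Finset.sum_const, nsmul_eq_mul]
    congr 1
    rw [Nat.card_eq_fintype_card, Fintype.card_subtype]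
  · -- pairwise disjointness
    intro f _ g _ hfg
    obtain ⟨a, ha⟩ := Function.ne_iff.mp hfg
    refine Set.disjoint_left.mpr fun ω hωf hωg => ?_
    exact ha (huniq (ω a) (f a) (g a) (hωf a (Set.mem_univ a)) (hωg a (Set.mem_univ a)))

/-- Continuum limit of digraph homomorphism counts: if finite digraphs
`G_n = (V_n, E_n)` discretize a measurable digraph `(Ω, E)` on a complete probability
space — i.e. `Ẽ_n = ⋃_{(v,w) ∈ E_n} A_{n,v} × A_{n,w}` for measurable partitions
`(A_{n,v})` of `Ω` into sets of measure `1/|V_n|`, with `(ρ×ρ)(Ẽ_n Δ E) → 0` — then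
for every finite digraph `G' = (V', E')`,
`|Hom(G',G_n)|/|V_n|^{|V'|} → ρ^{×V'}(Hom(G',(Ω,E)))`. -/
theorem stmt9 {Ω : Type*} [MeasurableSpace Ω] (ρ : Measure Ω) [IsProbabilityMeasure ρ]
    (hcomplete : ρ.IsComplete)
    (E : Set (Ω × Ω)) (hE : MeasurableSet E)
    (V : ℕ → Type*) [∀ n, Fintype (V n)] (En : ∀ n, V n → V n → Prop)
    (hirr : ∀ n v, ¬En n v v)
    (A : ∀ n, V n → Set Ω) (hmeas : ∀ n v, MeasurableSet (A n v))
    (hdisj : ∀ n, Pairwise (Function.onFun Disjoint (A n)))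
    (hcover : ∀ n, ⋃ v, A n v = Set.univ)
    (hsize : ∀ n v, ρ (A n v) = 1 / (Fintype.card (V n) : ℝ≥0∞))
    (hconv : Tendsto (fun n =>
        ((ρ.prod ρ) (symmDiff
          {p : Ω × Ω | ∃ v w, En n v w ∧ p.1 ∈ A n v ∧ p.2 ∈ A n w} E)).toReal)
      atTop (nhds 0))
    {V' : Type*} [Fintype V'] (E' : V' → V' → Prop) (hirr' : ∀ v, ¬E' v v) :
    Tendsto (fun n =>
        (Nat.card {f : V' → V n // ∀ a b, E' a b → En n (f a) (f b)} : ℝ) /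
          (Fintype.card (V n) : ℝ) ^ (Fintype.card V'))
      atTop
      (nhds (((Measure.pi fun _ : V' => ρ)
        {ω : V' → Ω | ∀ v w, E' v w → (ω v, ω w) ∈ E}).toReal)) := by
  classical
  set μ : Measure (V' → Ω) := Measure.pi fun _ : V' => ρ with hμ
  set Sn : ℕ → Set (Ω × Ω) :=
    fun n => {p : Ω × Ω | ∃ v w, En n v w ∧ p.1 ∈ A n v ∧ p.2 ∈ A n w} with hSn
  set Tn : ℕ → Set (V' → Ω) :=
    fun n => {ω : V' → Ω | ∀ a b, E' a b → (ω a, ω b) ∈ Sn n} with hTn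
  set T : Set (V' → Ω) := {ω : V' → Ω | ∀ v w, E' v w → (ω v, ω w) ∈ E} with hT
  set D : ℕ → Set (Ω × Ω) := fun n => (Sn n) ∆ E with hD
  have hSnmeas : ∀ n, MeasurableSet (Sn n) := by
    intro n
    have : Sn n = ⋃ v, ⋃ w, ⋃ (_ : En n v w), (A n v) ×ˢ (A n w) := by
      ext p
      simp only [hSn, Set.mem_setOf_eq, Set.mem_iUnion, Set.mem_prod]
      tauto
    rw [this]
    exact MeasurableSet.iUnion fun v => MeasurableSet.iUnion fun w =>
      MeasurableSet.iUnion fun _ => (hmeas n v).prod (hmeas n w)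
  have hDmeas : ∀ n, MeasurableSet (D n) := fun n => (hSnmeas n).symmDiff hE
  -- Step 1: counting identity
  have hcount : ∀ n, (Nat.card {f : V' → V n // ∀ a b, E' a b → En n (f a) (f b)} : ℝ) /
      (Fintype.card (V n) : ℝ) ^ (Fintype.card V') = (μ (Tn n)).toReal := by
    intro n
    have := stmt9_counting ρ (A n) (hmeas n) (hdisj n) (hcover n) (hsize n) (En n) E'
    have heq : μ (Tn n) = (Nat.card {f : V' → V n // ∀ a b, E' a b → En n (f a) (f b)} : ℝ≥0∞)
        * (1 / (Fintype.card (V n) : ℝ≥0∞)) ^ (Fintype.card V') := this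
    rw [heq, ENNReal.toReal_mul, ENNReal.toReal_pow, ENNReal.toReal_div]
    simp only [ENNReal.toReal_natCast, ENNReal.toReal_one]
    rw [div_pow, one_pow, mul_one_div]
  -- Step 2: the symmetric-difference bound
  set U : ℕ → V' × V' → Set (V' → Ω) := fun n p =>
    if E' p.1 p.2 then (fun ω : V' → Ω => (ω p.1, ω p.2)) ⁻¹' (D n) else ∅ with hU
  have hsub : ∀ n, (Tn n) ∆ T ⊆ ⋃ p : V' × V', U n p := by
    intro n ω hω
    rcases Set.mem_symmDiff.mp hω with ⟨h1, h2⟩ | ⟨h1, h2⟩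
    · simp only [hT, Set.mem_setOf_eq, not_forall] at h2
      obtain ⟨v, w, hvw, hnE⟩ := h2
      refine Set.mem_iUnion.mpr ⟨(v, w), ?_⟩
      simp only [hU, if_pos hvw]
      exact Set.mem_symmDiff.mpr (Or.inl ⟨h1 v w hvw, hnE⟩)
    · simp only [hTn, Set.mem_setOf_eq, not_forall] at h2
      obtain ⟨v, w, hvw, hnSn⟩ := h2
      refine Set.mem_iUnion.mpr ⟨(v, w), ?_⟩
      simp only [hU, if_pos hvw]
      exact Set.mem_symmDiff.mpr (Or.inr ⟨h1 v w hvw, hnSn⟩)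
  have hUle : ∀ n p, μ (U n p) ≤ (ρ.prod ρ) (D n) := by
    intro n p
    by_cases hp : E' p.1 p.2
    · have hne : p.1 ≠ p.2 := fun h => hirr' p.1 (h ▸ hp)
      have : μ (U n p) = (ρ.prod ρ) (D n) := by
        rw [hU]
        simp only [if_pos hp]
        rw [← Measure.map_apply
          ((measurable_pi_apply p.1).prodMk (measurable_pi_apply p.2)) (hDmeas n),
          stmt9_map_eval_pair ρ hne]
      exact this.le
    · simp [hU, if_neg hp]
  have hΔle : ∀ n, μ ((Tn n) ∆ T) ≤ (Fintype.card (V' × V') : ℝ≥0∞) * (ρ.prod ρ) (D n) := by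
    intro n
    calc μ ((Tn n) ∆ T) ≤ μ (⋃ p : V' × V', U n p) := measure_mono (hsub n)
      _ ≤ ∑' p : V' × V', μ (U n p) := measure_iUnion_le _
      _ ≤ ∑' _ : V' × V', (ρ.prod ρ) (D n) := ENNReal.tsum_le_tsum fun p => hUle n p
      _ = (Fintype.card (V' × V') : ℝ≥0∞) * (ρ.prod ρ) (D n) := by
          rw [tsum_fintype, Finset.sum_const, Finset.card_univ, nsmul_eq_mul]
  -- Step 3: real-valued bound
  have hbound : ∀ n, |(μ (Tn n)).toReal - (μ T).toReal|
      ≤ (Fintype.card (V' × V') : ℝ) * ((ρ.prod ρ) (D n)).toReal := by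
    intro n
    have hfin : ∀ s : Set (V' → Ω), μ s ≠ ∞ := fun s => measure_ne_top μ s
    have h1 : μ (Tn n) ≤ μ T + μ ((Tn n) ∆ T) := by
      refine le_trans (measure_mono ?_) (measure_union_le _ _)
      intro ω hω
      by_cases h : ω ∈ T
      · exact Or.inl h
      · exact Or.inr (Set.mem_symmDiff.mpr (Or.inl ⟨hω, h⟩))
    have h2 : μ T ≤ μ (Tn n) + μ ((Tn n) ∆ T) := by
      refine le_trans (measure_mono ?_) (measure_union_le _ _)
      intro ω hω
      by_cases h : ω ∈ Tn n
      · exact Or.inl h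
      · exact Or.inr (Set.mem_symmDiff.mpr (Or.inr ⟨hω, h⟩))
    have hc : (μ ((Tn n) ∆ T)).toReal
        ≤ (Fintype.card (V' × V') : ℝ) * ((ρ.prod ρ) (D n)).toReal := by
      have := ENNReal.toReal_mono ?_ (hΔle n)
      · rwa [ENNReal.toReal_mul, ENNReal.toReal_natCast] at this
      · exact ENNReal.mul_ne_top (ENNReal.natCast_ne_top _) (measure_ne_top _ _)
    have h1' : (μ (Tn n)).toReal ≤ (μ T).toReal + (μ ((Tn n) ∆ T)).toReal := by
      have := ENNReal.toReal_mono (ENNReal.add_ne_top.mpr ⟨hfin _, hfin _⟩) h1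
      rwa [ENNReal.toReal_add (hfin _) (hfin _)] at this
    have h2' : (μ T).toReal ≤ (μ (Tn n)).toReal + (μ ((Tn n) ∆ T)).toReal := by
      have := ENNReal.toReal_mono (ENNReal.add_ne_top.mpr ⟨hfin _, hfin _⟩) h2
      rwa [ENNReal.toReal_add (hfin _) (hfin _)] at this
    rw [abs_sub_le_iff]
    constructor <;> [skip; skip] <;> linarith
  -- Step 4: conclude
  have hgoal : Tendsto (fun n => (μ (Tn n)).toReal) atTop (nhds ((μ T).toReal)) := by
    rw [tendsto_iff_dist_tendsto_zero]
    have hconv' : Tendsto (fun n => (Fintype.card (V' × V') : ℝ) * ((ρ.prod ρ) (D n)).toReal)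
        atTop (nhds 0) := by
      have := hconv.const_mul (Fintype.card (V' × V') : ℝ)
      simpa using this
    refine squeeze_zero (fun n => dist_nonneg) (fun n => ?_) hconv'
    rw [Real.dist_eq]
    exact hbound n
  refine Tendsto.congr (fun n => (hcount n).symm) hgoal
end

section
/- Let μ be a compactly supported probability measure on ℝ with support radius rad(μ), and let κ_bool,k(μ) denote its k-th boolean cumulant. Then |κ_bool,k(μ)| ≤ rad(μ)^k for all k ≥ 1. -/
open MeasureTheory

/-- The `k`-th boolean cumulant of a measure `μ` on `ℝ`:
`κ_bool,k(μ) = ∑_{π ∈ I_k} (-1)^{|π|-1} ∏_{B ∈ π} m_{|B|}(μ)`, the sum over interval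
partitions of `[k]` (encoded as compositions of `k`) with `m_j(μ)` the `j`-th moment. -/
noncomputable def boolCumulant (μ : Measure ℝ) (k : ℕ) : ℝ :=
  ∑ c : Composition k, (-1 : ℝ) ^ (c.length - 1) *
    ∏ i : Fin c.length, ∫ x, x ^ (c.blocksFun i) ∂μ

/-- The support radius of a measure on `ℝ`:
`rad(μ) = inf {R > 0 : supp(μ) ⊆ [-R,R]}`. -/
noncomputable def suppRadius (μ : Measure ℝ) : ℝ :=
  sInf {R : ℝ | 0 < R ∧ μ (Set.Icc (-R) R)ᶜ = 0}


noncomputable def mom (μ : Measure ℝ) (j : ℕ) : ℝ := ∫ x, x ^ j ∂μ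

lemma prod_blocksFun {M : Type*} [CommMonoid M] {n : ℕ} (c : Composition n) (f : ℕ → M) :
    ∏ i : Fin c.length, f (c.blocksFun i) = (c.blocks.map f).prod := by
  rw [← Composition.ofFn_blocksFun, List.map_ofFn, List.prod_ofFn]; rfl

/-- signed sum with sign (-1)^length -/
noncomputable def Tsum (μ : Measure ℝ) (n : ℕ) : ℝ :=
  ∑ c : Composition n, (-1 : ℝ) ^ c.length * (c.blocks.map (mom μ)).prod

lemma boolCumulant_eq (μ : Measure ℝ) (k : ℕ) :
    boolCumulant μ k = ∑ c : Composition k,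
      (-1 : ℝ) ^ (c.length - 1) * (c.blocks.map (mom μ)).prod := by
  unfold boolCumulant
  exact Finset.sum_congr rfl fun c _ =>
    congrArg (HMul.hMul ((-1 : ℝ) ^ (c.length - 1))) (prod_blocksFun c (mom μ))

lemma composition_zero_blocks (c : Composition 0) : c.blocks = [] := by
  have h := c.blocks_sum
  cases hb : c.blocks with
  | nil => rfl
  | cons a t =>
      have ha : 0 < a := c.blocks_pos (by rw [hb]; exact List.mem_cons_self)
      rw [hb] at h
      simp [List.sum_cons] at h
      omega

lemma length_pos {k : ℕ} (hk : 1 ≤ k) (c : Composition k) : 0 < c.length := by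
  rcases Nat.eq_zero_or_pos c.length with h | h
  · exfalso
    have hb : c.blocks = [] := List.eq_nil_of_length_eq_zero h
    have := c.blocks_sum
    rw [hb] at this
    simp at this
    omega
  · exact h

lemma Tsum_zero (μ : Measure ℝ) : Tsum μ 0 = 1 := by
  unfold Tsum
  have hu : (Finset.univ : Finset (Composition 0)) = {Composition.ones 0} := by
    apply Finset.eq_singleton_iff_unique_mem.mpr
    refine ⟨Finset.mem_univ _, fun c _ => ?_⟩
    apply Composition.ext
    simp [composition_zero_blocks c, Composition.ones]
  rw [hu, Finset.sum_singleton]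
  simp [Composition.ones, Composition.length]

lemma Tsum_eq_neg (μ : Measure ℝ) {n : ℕ} (hn : 1 ≤ n) : Tsum μ n = - boolCumulant μ n := by
  rw [boolCumulant_eq, Tsum, ← Finset.sum_neg_distrib]
  refine Finset.sum_congr rfl fun c _ => ?_
  have h := length_pos hn c
  have hs : (-1 : ℝ) ^ c.length = -((-1 : ℝ) ^ (c.length - 1)) := by
    conv_lhs => rw [show c.length = (c.length - 1) + 1 from by omega]
    rw [pow_succ]; ring
  rw [hs]; ring

def compCons {k : ℕ} (p : Σ j : Fin k, Composition (j : ℕ)) : Composition k where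
  blocks := (k - (p.1 : ℕ)) :: p.2.blocks
  blocks_pos := by
    intro i hi
    have hlt := p.1.isLt
    rcases List.mem_cons.mp hi with h | h
    · omega
    · exact p.2.blocks_pos h
  blocks_sum := by
    have hlt := p.1.isLt
    simp only [List.sum_cons, p.2.blocks_sum]
    omega

lemma compCons_bijective {k : ℕ} (hk : 1 ≤ k) :
    Function.Bijective (compCons (k := k)) := by
  constructor
  · rintro ⟨⟨j₁, h₁⟩, c₁⟩ ⟨⟨j₂, h₂⟩, c₂⟩ h
    have hb : (k - j₁) :: c₁.blocks = (k - j₂) :: c₂.blocks := congrArg Composition.blocks h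
    injection hb with hh ht
    have hj : j₁ = j₂ := by omega
    subst hj
    exact Sigma.ext rfl (heq_of_eq (Composition.ext ht))
  · intro c
    have hbne : c.blocks ≠ [] := by
      intro h
      have hs := c.blocks_sum
      rw [h] at hs
      simp at hs
      omega
    obtain ⟨b, t, hbt⟩ := List.exists_cons_of_ne_nil hbne
    have hbpos : 0 < b := c.blocks_pos (by rw [hbt]; exact List.mem_cons_self)
    have hsum := c.blocks_sum
    rw [hbt, List.sum_cons] at hsum
    have hj : t.sum < k := by omega
    refine ⟨⟨⟨t.sum, hj⟩, ⟨t, fun {i} hi => c.blocks_pos (by rw [hbt]; exact List.mem_cons_of_mem _ hi), rfl⟩⟩, ?_⟩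
    apply Composition.ext
    show (k - t.sum) :: t = c.blocks
    rw [hbt]
    congr 1
    omega

lemma boolCumulant_rec (μ : Measure ℝ) (n : ℕ) :
    boolCumulant μ (n + 1) =
      mom μ (n + 1) - ∑ j ∈ Finset.range n, mom μ (n - j) * boolCumulant μ (j + 1) := by
  have hbij := compCons_bijective (k := n + 1) (by omega)
  have h1 : boolCumulant μ (n + 1)
      = ∑ p : Σ j : Fin (n + 1), Composition (j : ℕ),
          (-1 : ℝ) ^ ((compCons p).length - 1) * ((compCons p).blocks.map (mom μ)).prod := by
    rw [boolCumulant_eq]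
    exact (Fintype.sum_bijective _ hbij _ _ (fun p => rfl)).symm
  rw [h1, ← Finset.univ_sigma_univ, Finset.sum_sigma]
  have h2 : ∀ j : Fin (n + 1),
      (∑ c : Composition (j : ℕ),
        (-1 : ℝ) ^ ((compCons ⟨j, c⟩).length - 1) * ((compCons ⟨j, c⟩).blocks.map (mom μ)).prod)
      = mom μ (n + 1 - (j : ℕ)) * Tsum μ (j : ℕ) := by
    intro j
    rw [Tsum, Finset.mul_sum]
    refine Finset.sum_congr rfl fun c _ => ?_
    have hl : (compCons ⟨j, c⟩).length = c.length + 1 := rfl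
    have hb : (compCons ⟨j, c⟩).blocks = (n + 1 - (j : ℕ)) :: c.blocks := rfl
    rw [hl, hb, List.map_cons, List.prod_cons]
    simp only [Nat.add_sub_cancel]
    ring
  rw [Finset.sum_congr rfl (fun j _ => h2 j), Fin.sum_univ_succ]
  simp only [Fin.val_zero, Fin.val_succ, Nat.sub_zero, Tsum_zero, mul_one]
  rw [Fin.sum_univ_eq_sum_range (fun m => mom μ (n + 1 - (m + 1)) * Tsum μ (m + 1))]
  rw [sub_eq_add_neg, ← Finset.sum_neg_distrib]
  congr 1
  refine Finset.sum_congr rfl fun j hj => ?_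
  rw [Tsum_eq_neg μ (by omega), Nat.succ_sub_succ]
  ring

noncomputable def gfun (μ : Measure ℝ) : ℕ → ℝ → ℝ
  | 0 => fun _ => 1
  | n + 1 => fun x => x * gfun μ n x - ∫ y, y * gfun μ n y ∂μ

noncomputable def bs (μ : Measure ℝ) (n : ℕ) : ℝ := ∫ y, y * gfun μ n y ∂μ

lemma gfun_succ (μ : Measure ℝ) (n : ℕ) (x : ℝ) :
    gfun μ (n + 1) x = x * gfun μ n x - bs μ n := rfl

lemma gfun_continuous (μ : Measure ℝ) (n : ℕ) : Continuous (gfun μ n) := by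
  induction n with
  | zero => exact continuous_const
  | succ n ih =>
      show Continuous fun x => x * gfun μ n x - ∫ y, y * gfun μ n y ∂μ
      exact (continuous_id.mul ih).sub continuous_const

variable {μ : Measure ℝ} [IsProbabilityMeasure μ] {M : ℝ}

lemma integrable_of_cont (hae : ∀ᵐ x ∂μ, |x| ≤ M) (f : ℝ → ℝ) (hf : Continuous f) :
    Integrable f μ := by
  obtain ⟨C, hC⟩ := (isCompact_Icc (a := -M) (b := M)).exists_bound_of_continuousOn
    hf.continuousOn
  refine Integrable.mono' (integrable_const C) hf.aestronglyMeasurable ?_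
  filter_upwards [hae] with x hx
  have hx' := abs_le.mp hx
  exact hC x ⟨hx'.1, hx'.2⟩

lemma integral_sq_gfun_succ (hae : ∀ᵐ x ∂μ, |x| ≤ M) (n : ℕ) :
    ∫ x, (gfun μ (n + 1) x) ^ 2 ∂μ
      = (∫ x, (x * gfun μ n x) ^ 2 ∂μ) - (bs μ n) ^ 2 := by
  have hg := gfun_continuous μ n
  have hxg : Continuous fun x : ℝ => x * gfun μ n x := continuous_id.mul hg
  have h1 : ∀ x : ℝ, (gfun μ (n + 1) x) ^ 2
      = (x * gfun μ n x) ^ 2 - 2 * bs μ n * (x * gfun μ n x) + (bs μ n) ^ 2 := by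
    intro x; rw [gfun_succ]; ring
  simp only [h1]
  rw [integral_add, integral_sub, integral_const_mul, integral_const]
  · have hbs : ∫ x, x * gfun μ n x ∂μ = bs μ n := rfl
    rw [hbs]
    simp [measure_univ]
    ring
  · exact integrable_of_cont hae _ (hxg.pow 2)
  · exact (integrable_of_cont hae _ hxg).const_mul _
  · exact ((integrable_of_cont hae _ (hxg.pow 2)).sub
      ((integrable_of_cont hae _ hxg).const_mul _))
  · exact integrable_const _

lemma int_xg_sq_le (hM : 0 ≤ M) (hae : ∀ᵐ x ∂μ, |x| ≤ M) (n : ℕ)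
    (hgn : ∫ x, (gfun μ n x) ^ 2 ∂μ ≤ M ^ (2 * n)) :
    ∫ x, (x * gfun μ n x) ^ 2 ∂μ ≤ M ^ (2 * (n + 1)) := by
  have hg := gfun_continuous μ n
  have hxg : Continuous fun x : ℝ => x * gfun μ n x := continuous_id.mul hg
  have h1 : ∫ x, (x * gfun μ n x) ^ 2 ∂μ ≤ ∫ x, M ^ 2 * (gfun μ n x) ^ 2 ∂μ := by
    refine integral_mono_ae (integrable_of_cont hae _ (hxg.pow 2))
      ((integrable_of_cont hae _ (hg.pow 2)).const_mul _) ?_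
    filter_upwards [hae] with x hx
    have hx' := abs_le.mp hx
    have hx2 : x ^ 2 ≤ M ^ 2 := by nlinarith
    calc (x * gfun μ n x) ^ 2 = x ^ 2 * (gfun μ n x) ^ 2 := by ring
      _ ≤ M ^ 2 * (gfun μ n x) ^ 2 :=
          mul_le_mul_of_nonneg_right hx2 (sq_nonneg _)
  rw [integral_const_mul] at h1
  calc ∫ x, (x * gfun μ n x) ^ 2 ∂μ ≤ M ^ 2 * ∫ x, (gfun μ n x) ^ 2 ∂μ := h1
    _ ≤ M ^ 2 * M ^ (2 * n) := by
        exact mul_le_mul_of_nonneg_left hgn (by positivity)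
    _ = M ^ (2 * (n + 1)) := by rw [← pow_add]; ring_nf

lemma sq_int_le (hM : 0 ≤ M) (hae : ∀ᵐ x ∂μ, |x| ≤ M) (n : ℕ) :
    ∫ x, (gfun μ n x) ^ 2 ∂μ ≤ M ^ (2 * n) := by
  induction n with
  | zero =>
      have : ∀ x : ℝ, (gfun μ 0 x) ^ 2 = 1 := fun x => by simp [gfun]
      simp only [this]
      simp [measure_univ]
  | succ n ih =>
      rw [integral_sq_gfun_succ hae n]
      have h2 := int_xg_sq_le hM hae n ih
      have h3 : (0 : ℝ) ≤ (bs μ n) ^ 2 := sq_nonneg _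
      linarith

lemma abs_bs_le (hM : 0 ≤ M) (hae : ∀ᵐ x ∂μ, |x| ≤ M) (n : ℕ) :
    |bs μ n| ≤ M ^ (n + 1) := by
  have h0 : 0 ≤ ∫ x, (gfun μ (n + 1) x) ^ 2 ∂μ := integral_nonneg fun x => sq_nonneg _
  have hk := integral_sq_gfun_succ hae n
  have h2 := int_xg_sq_le hM hae n (sq_int_le hM hae n)
  have h3 : (bs μ n) ^ 2 ≤ (M ^ (n + 1)) ^ 2 := by
    have : M ^ (2 * (n + 1)) = (M ^ (n + 1)) ^ 2 := by rw [← pow_mul]; ring_nf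
    linarith [this ▸ h2]
  calc |bs μ n| = Real.sqrt ((bs μ n) ^ 2) := (Real.sqrt_sq_eq_abs _).symm
    _ ≤ Real.sqrt ((M ^ (n + 1)) ^ 2) := Real.sqrt_le_sqrt h3
    _ = M ^ (n + 1) := Real.sqrt_sq (by positivity)

lemma mul_sum_pow (x : ℝ) (n : ℕ) (a : ℕ → ℝ) :
    x * ∑ i ∈ Finset.range n, a i * x ^ (n - 1 - i)
      = ∑ i ∈ Finset.range n, a i * x ^ (n - i) := by
  rw [Finset.mul_sum]
  refine Finset.sum_congr rfl fun i hi => ?_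
  have hi' := Finset.mem_range.mp hi
  have h2 : n - i = (n - 1 - i) + 1 := by omega
  rw [h2, pow_succ]
  ring

lemma gfun_expand (μ : Measure ℝ) (n : ℕ) (x : ℝ) :
    gfun μ n x = x ^ n - ∑ i ∈ Finset.range n, bs μ i * x ^ (n - 1 - i) := by
  induction n with
  | zero => simp [gfun]
  | succ n ih =>
      rw [gfun_succ, ih, mul_sub, mul_sum_pow, Finset.sum_range_succ]
      simp only [Nat.add_sub_cancel, Nat.sub_self, pow_zero, mul_one]
      have hx : x * x ^ n = x ^ (n + 1) := (pow_succ x n).symm ▸ (mul_comm x (x ^ n))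
      rw [hx]
      ring

lemma bs_rec (hae : ∀ᵐ x ∂μ, |x| ≤ M) (n : ℕ) :
    bs μ n = mom μ (n + 1) - ∑ i ∈ Finset.range n, mom μ (n - i) * bs μ i := by
  have hfun : ∀ y : ℝ, y * gfun μ n y
      = y ^ (n + 1) - ∑ i ∈ Finset.range n, bs μ i * y ^ (n - i) := by
    intro y
    rw [gfun_expand, mul_sub, mul_sum_pow]
    congr 1
    exact (pow_succ y n).symm ▸ (mul_comm y (y ^ n))
  have hbs : bs μ n = ∫ y, (y ^ (n + 1) - ∑ i ∈ Finset.range n, bs μ i * y ^ (n - i)) ∂μ := by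
    unfold bs
    exact integral_congr_ae (Filter.Eventually.of_forall hfun)
  rw [hbs, integral_sub, integral_finset_sum]
  · unfold mom
    congr 1
    refine Finset.sum_congr rfl fun i _ => ?_
    rw [integral_const_mul]
    ring
  · intro i _
    exact (integrable_of_cont hae _ (continuous_pow _)).const_mul _
  · exact integrable_of_cont hae _ (continuous_pow _)
  · refine integrable_finset_sum _ fun i _ => ?_
    exact (integrable_of_cont hae _ (continuous_pow _)).const_mul _

lemma kappa_eq_bs (hae : ∀ᵐ x ∂μ, |x| ≤ M) (n : ℕ) :
    boolCumulant μ (n + 1) = bs μ n := by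
  induction n using Nat.strong_induction_on with
  | _ n ih =>
      rw [boolCumulant_rec, bs_rec hae]
      congr 1
      refine Finset.sum_congr rfl fun i hi => ?_
      rw [ih i (Finset.mem_range.mp hi)]

lemma suppRadius_nonneg (hcpt : ∃ R : ℝ, 0 < R ∧ μ (Set.Icc (-R) R)ᶜ = 0) :
    0 ≤ suppRadius μ :=
  le_csInf hcpt fun _ hR => hR.1.le

lemma ae_abs_le_suppRadius (hcpt : ∃ R : ℝ, 0 < R ∧ μ (Set.Icc (-R) R)ᶜ = 0) :
    ∀ᵐ x ∂μ, |x| ≤ suppRadius μ := by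
  set S := {R : ℝ | 0 < R ∧ μ (Set.Icc (-R) R)ᶜ = 0} with hS
  have hne : S.Nonempty := hcpt
  have hq : ∀ q : ℚ, suppRadius μ < (q : ℝ) → μ (Set.Icc (-(q : ℝ)) q)ᶜ = 0 := by
    intro q hql
    obtain ⟨R, hR, hRq⟩ := exists_lt_of_csInf_lt hne hql
    refine measure_mono_null ?_ hR.2
    exact Set.compl_subset_compl.mpr (Set.Icc_subset_Icc (by linarith) hRq.le)
  rw [ae_iff]
  have hsub : {x : ℝ | ¬ |x| ≤ suppRadius μ}
      ⊆ ⋃ q : ℚ, ⋃ _ : suppRadius μ < (q : ℝ), (Set.Icc (-(q : ℝ)) q)ᶜ := by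
    intro x hx
    have hx' : suppRadius μ < |x| := not_le.mp hx
    obtain ⟨q, hq1, hq2⟩ := exists_rat_btwn hx'
    refine Set.mem_iUnion.mpr ⟨q, Set.mem_iUnion.mpr ⟨hq1, ?_⟩⟩
    rw [Set.mem_compl_iff, Set.mem_Icc]
    rintro ⟨h1, h2⟩
    exact absurd (abs_le.mpr ⟨h1, h2⟩) (not_le.mpr hq2)
  exact measure_mono_null hsub
    (measure_iUnion_null fun q => measure_iUnion_null fun hql => hq q hql)

/-- For a compactly supported probability measure `μ` on `ℝ`, the boolean cumulants
satisfy `|κ_bool,k(μ)| ≤ rad(μ)^k` for all `k ≥ 1`. -/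
theorem stmt16 (μ : Measure ℝ) [IsProbabilityMeasure μ]
    (hcpt : ∃ R : ℝ, 0 < R ∧ μ (Set.Icc (-R) R)ᶜ = 0) (k : ℕ) (hk : 1 ≤ k) :
    |boolCumulant μ k| ≤ suppRadius μ ^ k := by
  have hM : 0 ≤ suppRadius μ := suppRadius_nonneg hcpt
  have hae : ∀ᵐ x ∂μ, |x| ≤ suppRadius μ := ae_abs_le_suppRadius hcpt
  obtain ⟨n, rfl⟩ : ∃ n, k = n + 1 := ⟨k - 1, by omega⟩
  rw [kappa_eq_bs hae]
  exact abs_bs_le hM hae n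
end
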